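/- Let b ≥ 2 and 0 ≤ k < b, and let E_n count the ones among the first n entries of the escape sequence e(𝕋_b, k) given by Proposition: e = 1 0^{w_1} 1 0^{w_2} ⋯ with w_t = z_t if k = 0 and w_t = [ℓ_t = b-k] if k > 0. Set ρ = (b-1)/b and Δ_n = (E_n - ρn)/log_b n. Then liminf_n Δ_n = 0 if k = 0, liminf_n Δ_n = -(k-1)/b if k > 0, and limsup_n Δ_n = (b-k-1)/b. -/

import Mathlib

/-- The block lengths of the escape sequence of the `b`-ary tree with constant rotor
configuration `k`: `w t = z_t` (number of trailing zeros of `t` in base `b`) when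
`k = 0`, and `w t = [ℓ_t = b-k]` (indicator that the last nonzero base-`b` digit of
`t` is `b-k`) when `k > 0`. -/
def blockLen (b k t : ℕ) : ℕ :=
  if k = 0 then Nat.maxPowDiv b t
  else if (t / b ^ Nat.maxPowDiv b t) % b = b - k then 1 else 0

open Classical in
/-- The explicit escape sequence `e = 1 0^{w_1} 1 0^{w_2} 1 0^{w_3} ⋯` (indexed from
0, so `e 0` is `e_1`): position `n` is a one exactly when `n = m + Σ_{t=1}^m w_t`. -/
noncomputable def explicitSeq (b k : ℕ) : ℕ → ℕ := fun n =>
  if ∃ m : ℕ, n = m + ∑ t ∈ Finset.Icc 1 m, blockLen b k t then 1 else 0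

namespace RTD

def S (b k m : ℕ) : ℕ := ∑ t ∈ Finset.Icc 1 m, blockLen b k t

def T (b k m : ℕ) : ℕ := m + S b k m

lemma S_succ (b k m : ℕ) : S b k (m+1) = S b k m + blockLen b k (m+1) :=
  Finset.sum_Icc_succ_top (by omega) _

lemma mod_cond (b k x : ℕ) (hk : k ≤ b) : x % b = (b - k) % b ↔ b ∣ (x + k) := by
  constructor
  · intro h
    have h1 : (x + k) % b = ((b - k) + k) % b := by
      rw [Nat.add_mod, h, ← Nat.add_mod]
    rw [Nat.sub_add_cancel hk] at h1
    exact Nat.dvd_of_mod_eq_zero (by rw [h1, Nat.mod_self])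
  · intro h
    have h0 : (x + k) % b = ((b - k) + k) % b := by
      rw [Nat.sub_add_cancel hk, Nat.mod_self, Nat.mod_eq_zero_of_dvd h]
    exact Nat.ModEq.add_right_cancel' k h0

lemma term_step (b k t j : ℕ) (hk : k ≤ b) (ht : 1 ≤ t) :
    (t / b ^ j + k) / b
      = ((t - 1) / b ^ j + k) / b
        + (if b ^ j ∣ t ∧ t / b ^ j % b = (b - k) % b then 1 else 0) := by
  obtain ⟨s, rfl⟩ : ∃ s, t = s + 1 := ⟨t - 1, by omega⟩
  simp only [Nat.add_sub_cancel]
  by_cases h : b ^ j ∣ (s + 1)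
  · have hdiv : (s + 1) / b ^ j = s / b ^ j + 1 := by
      rw [Nat.succ_div, if_pos h]
    have harr : s / b ^ j + 1 + k = s / b ^ j + k + 1 := by omega
    rw [hdiv, harr, Nat.succ_div]
    congr 1
    have hiff : (b ∣ s / b ^ j + k + 1)
        ↔ (b ^ j ∣ s + 1 ∧ (s + 1) / b ^ j % b = (b - k) % b) := by
      rw [mod_cond b k _ hk, hdiv, harr]
      tauto
    rw [if_congr hiff rfl rfl, hdiv]
  · have hdiv : (s + 1) / b ^ j = s / b ^ j := by
      rw [Nat.succ_div, if_neg h, Nat.add_zero]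
    rw [hdiv, if_neg (by tauto), Nat.add_zero]

lemma delta_sum (b k t N : ℕ) (hb : 2 ≤ b) (hk : k < b) (ht : 1 ≤ t) (htN : t < b ^ N) :
    ∑ j ∈ Finset.range N,
        (if b ^ j ∣ t ∧ t / b ^ j % b = (b - k) % b then 1 else 0)
      = blockLen b k t := by
  set z := Nat.maxPowDiv b t with hz
  have hz_dvd : b ^ z ∣ t := Nat.maxPowDiv.pow_dvd (p := b) (n := t)
  have hzN : z < N := by
    have h1 : b ^ z ≤ t := Nat.le_of_dvd (by omega) hz_dvd
    exact (Nat.pow_lt_pow_iff_right (by omega)).1 (lt_of_le_of_lt h1 htN)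
  by_cases hk0 : k = 0
  · subst hk0
    have hcond : ∀ j, (b ^ j ∣ t ∧ t / b ^ j % b = (b - 0) % b) ↔ j < z := by
      intro j
      constructor
      · rintro ⟨h1, h2⟩
        rw [Nat.sub_zero, Nat.mod_self] at h2
        have : b ∣ t / b ^ j := Nat.dvd_of_mod_eq_zero h2
        have : b ^ (j + 1) ∣ t := by
          rw [pow_succ]
          exact (Nat.dvd_div_iff_mul_dvd h1).1 this
        exact (Nat.pow_dvd_iff_le_padicValNat (p := b) (n := t) (by omega) (by omega)).1 this
      · intro hj
        have h1 : b ^ (j + 1) ∣ t := dvd_trans (pow_dvd_pow b (by omega)) hz_dvd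
        obtain ⟨c, rfl⟩ := h1
        constructor
        · exact dvd_mul_of_dvd_left (pow_dvd_pow b (by omega)) c
        · rw [Nat.sub_zero, Nat.mod_self, show b ^ (j+1) * c = b ^ j * (b * c) by ring,
            Nat.mul_div_cancel_left _ (by positivity), Nat.mul_mod_right]
    calc ∑ j ∈ Finset.range N, (if b ^ j ∣ t ∧ t / b ^ j % b = (b - 0) % b then 1 else 0)
        = ∑ j ∈ Finset.range N, (if j ∈ Finset.range z then 1 else 0) := by
          refine Finset.sum_congr rfl fun j _ => ?_
          rw [if_congr ((hcond j).trans (Iff.symm Finset.mem_range)) rfl rfl]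
      _ = z := by
          rw [Finset.sum_ite_mem]
          have : Finset.range N ∩ Finset.range z = Finset.range z := by
            ext x; simp; omega
          simp [this]
      _ = blockLen b 0 t := by simp [blockLen]; exact hz
  · have hbk : (b - k) % b = b - k := Nat.mod_eq_of_lt (by omega)
    rw [Finset.sum_eq_single_of_mem z (Finset.mem_range.2 hzN)]
    · simp [blockLen, hk0, hz_dvd, hbk, ← hz]
    · intro j _ hjz
      rw [if_neg]
      rintro ⟨h1, h2⟩
      rw [hbk] at h2
      rcases lt_or_gt_of_ne hjz with hlt | hgt
      · have h3 : b ^ (j + 1) ∣ t := dvd_trans (pow_dvd_pow b (by omega)) hz_dvd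
        obtain ⟨c, rfl⟩ := h3
        rw [show b ^ (j+1) * c = b ^ j * (b * c) by ring,
          Nat.mul_div_cancel_left _ (by positivity), Nat.mul_mod_right] at h2
        omega
      · exact absurd (show j ≤ z from (Nat.pow_dvd_iff_le_padicValNat (p := b) (n := t) (by omega) (by omega)).1 h1) (by omega)

lemma S_eq (b k : ℕ) (hb : 2 ≤ b) (hk : k < b) :
    ∀ m N, m < b ^ N → S b k m = ∑ j ∈ Finset.range N, (m / b ^ j + k) / b := by
  intro m
  induction m with
  | zero =>
    intro N _
    simp [S, Nat.div_eq_of_lt hk]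
  | succ m ih =>
    intro N hN
    have hm : m < b ^ N := by omega
    rw [S_succ, ih N hm, ← delta_sum b k (m+1) N hb hk (by omega) hN,
      ← Finset.sum_add_distrib]
    refine Finset.sum_congr rfl fun j _ => ?_
    have := term_step b k (m+1) j (by omega) (by omega)
    simpa using this.symm


lemma base_digit_expansion (b : ℕ) (hb : 2 ≤ b) :
    ∀ N m : ℕ, m < b ^ N →
      (m : ℤ) = ((b : ℤ) - 1) * ∑ j ∈ Finset.range N, ((m / b ^ (j+1) : ℕ) : ℤ)
        + ∑ j ∈ Finset.range N, ((m / b ^ j % b : ℕ) : ℤ) := by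
  intro N
  induction N with
  | zero => intro m hm; rw [pow_zero, Nat.lt_one_iff] at hm; subst hm; simp
  | succ N ih =>
    intro m hm
    have hdiv : m / b < b ^ N := by
      rw [Nat.div_lt_iff_lt_mul (by omega)]
      calc m < b ^ (N+1) := hm
        _ = b ^ N * b := by ring
    have IH := ih (m / b) hdiv
    have key1 : ∀ j : ℕ, m / b / b ^ j = m / b ^ (j+1) := by
      intro j; rw [Nat.div_div_eq_div_mul, ← pow_succ']
    rw [Finset.sum_range_succ', Finset.sum_range_succ']
    simp only [zero_add, pow_one, pow_zero, Nat.div_one]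
    have e1 : ∑ j ∈ Finset.range N, ((m / b ^ (j+1+1) : ℕ) : ℤ)
        = ∑ j ∈ Finset.range N, ((m / b / b ^ (j+1) : ℕ) : ℤ) := by
      refine Finset.sum_congr rfl fun j _ => by rw [key1 (j+1)]
    have e2 : ∑ j ∈ Finset.range N, ((m / b ^ (j+1) % b : ℕ) : ℤ)
        = ∑ j ∈ Finset.range N, ((m / b / b ^ j % b : ℕ) : ℤ) := by
      refine Finset.sum_congr rfl fun j _ => by rw [key1 j]
    rw [e1, e2]
    have hmod : (b : ℤ) * ((m / b : ℕ) : ℤ) + ((m % b : ℕ) : ℤ) = (m : ℤ) := by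
      exact_mod_cast congrArg (Nat.cast : ℕ → ℤ) (Nat.div_add_mod m b)
    linear_combination IH - hmod

lemma div_add_k_div (b k x : ℕ) (hb : 2 ≤ b) (hk : k < b) :
    (x + k) / b = x / b + (if b - k ≤ x % b then 1 else 0) := by
  conv_lhs => rw [← Nat.div_add_mod x b, add_assoc, Nat.mul_add_div (by omega)]
  congr 1
  have h1 : x % b < b := Nat.mod_lt _ (by omega)
  by_cases h : b - k ≤ x % b
  · rw [if_pos h]
    exact Nat.div_eq_of_lt_le (by omega) (by omega)
  · rw [if_neg h]
    exact Nat.div_eq_of_lt (by omega)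

def gd (b k a : ℕ) : ℤ := (a : ℤ) - ((b : ℤ) - 1) * (if b - k ≤ a then 1 else 0)

lemma gd_le (b k a : ℕ) (hb : 2 ≤ b) (hk : k < b) (ha : a < b) :
    gd b k a ≤ (b : ℤ) - 1 - k := by
  unfold gd; split <;> omega

lemma gd_ge (b k a : ℕ) (hb : 2 ≤ b) (hk : k < b) (hk1 : 1 ≤ k) (ha : a < b) :
    1 - (k : ℤ) ≤ gd b k a := by
  unfold gd; split <;> omega

lemma gd_nonneg (b a : ℕ) (hb : 2 ≤ b) (ha : a < b) : 0 ≤ gd b 0 a := by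
  unfold gd; split <;> omega

lemma gd_zero (b k : ℕ) (hk : k < b) : gd b k 0 = 0 := by
  unfold gd; rw [if_neg (by omega)]; simp


lemma Nm_digits (b k : ℕ) (hb : 2 ≤ b) (hk : k < b) (m N : ℕ) (hm : m < b ^ N) :
    (m : ℤ) - ((b : ℤ) - 1) * S b k m = ∑ j ∈ Finset.range N, gd b k (m / b ^ j % b) := by
  rw [S_eq b k hb hk m N hm]
  have key : ∀ j : ℕ, (m / b ^ j + k) / b
      = m / b ^ (j+1) + (if b - k ≤ m / b ^ j % b then 1 else 0) := by
    intro j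
    rw [div_add_k_div b k _ hb hk, Nat.div_div_eq_div_mul, ← pow_succ]
  have e0 : (∑ j ∈ Finset.range N, (m / b ^ j + k) / b)
      = ∑ j ∈ Finset.range N, (m / b ^ (j+1) + if b - k ≤ m / b ^ j % b then 1 else 0) :=
    Finset.sum_congr rfl fun j _ => key j
  rw [e0]
  have L2 := base_digit_expansion b hb N m hm
  unfold gd
  rw [Finset.sum_sub_distrib, ← Finset.mul_sum]
  push_cast [apply_ite (Nat.cast : ℕ → ℤ), Finset.sum_add_distrib] at L2 ⊢
  linear_combination L2

def G (b J : ℕ) : ℕ := ∑ j ∈ Finset.range J, b ^ j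

lemma G_succ (b J : ℕ) : G b (J+1) = b * G b J + 1 := by
  unfold G
  rw [Finset.sum_range_succ']
  simp [Finset.mul_sum, pow_succ']

lemma le_G (b J : ℕ) (hb : 2 ≤ b) : J ≤ G b J := by
  induction J with
  | zero => simp [G]
  | succ J ih =>
    have h1 : G b J ≤ b * G b J := Nat.le_mul_of_pos_left _ (by omega)
    rw [G_succ]; omega

lemma pow_le_G (b J : ℕ) (hb : 2 ≤ b) (hJ : 1 ≤ J) : b ^ (J - 1) ≤ G b J :=
  Finset.single_le_sum (fun i _ => Nat.zero_le _) (Finset.mem_range.2 (by omega))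

lemma G_mul (b J : ℕ) (hb : 2 ≤ b) : (b - 1) * G b J + 1 = b ^ J := by
  obtain ⟨c, rfl⟩ : ∃ c, b = c + 1 := ⟨b - 1, by omega⟩
  simp only [Nat.add_sub_cancel]
  induction J with
  | zero => simp [G]
  | succ J ih =>
    rw [G_succ]
    calc c * ((c+1) * G (c+1) J + 1) + 1 = (c+1) * (c * G (c+1) J + 1) := by ring
      _ = (c+1) * (c+1) ^ J := by rw [ih]
      _ = (c+1) ^ (J+1) := by ring

lemma rep_lt (b r J : ℕ) (hb : 2 ≤ b) (hr : r < b) : r * G b J < b ^ J := by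
  have h1 : r * G b J ≤ (b - 1) * G b J := Nat.mul_le_mul_right _ (by omega)
  have h2 := G_mul b J hb
  omega

lemma rep_digit (b r : ℕ) (hb : 2 ≤ b) (hr : r < b) :
    ∀ J j, j < J → (r * G b J) / b ^ j % b = r := by
  intro J
  induction J with
  | zero => omega
  | succ J ih =>
    intro j hj
    have hrw : r * G b (J+1) = b * (r * G b J) + r := by rw [G_succ]; ring
    cases j with
    | zero => rw [pow_zero, Nat.div_one, hrw, Nat.mul_add_mod, Nat.mod_eq_of_lt hr]
    | succ j =>
      rw [hrw, pow_succ', ← Nat.div_div_eq_div_mul,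
        Nat.mul_add_div (by omega), Nat.div_eq_of_lt hr, Nat.add_zero]
      exact ih j (by omega)

lemma Nm_rep (b k r J : ℕ) (hb : 2 ≤ b) (hk : k < b) (hrb : r < b) :
    ((r * G b J : ℕ) : ℤ) - ((b : ℤ) - 1) * S b k (r * G b J) = J * gd b k r := by
  rw [Nm_digits b k hb hk _ J (rep_lt b r J hb hrb),
    Finset.sum_congr rfl (fun j hj => by
      rw [rep_digit b r hb hrb J j (Finset.mem_range.1 hj)]),
    Finset.sum_const, Finset.card_range, nsmul_eq_mul]

lemma Nm_pow (b k J : ℕ) (hb : 2 ≤ b) (hk : k < b) :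
    ((b ^ J : ℕ) : ℤ) - ((b : ℤ) - 1) * S b k (b ^ J) = gd b k 1 := by
  have hlt : b ^ J < b ^ (J + 1) := Nat.pow_lt_pow_right (by omega) (by omega)
  rw [Nm_digits b k hb hk _ (J+1) hlt, Finset.sum_range_succ]
  have h1 : b ^ J / b ^ J % b = 1 := by
    rw [Nat.div_self (by positivity), Nat.mod_eq_of_lt (by omega)]
  have h2 : ∀ j ∈ Finset.range J, gd b k (b ^ J / b ^ j % b) = 0 := by
    intro j hj
    have hjJ : j < J := Finset.mem_range.1 hj
    rw [Nat.pow_div (by omega) (by omega),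
      Nat.mod_eq_zero_of_dvd (dvd_pow_self b (by omega)), gd_zero b k hk]
  rw [Finset.sum_congr rfl h2, h1]
  simp

lemma Nm_le (b k m : ℕ) (hb : 2 ≤ b) (hk : k < b) :
    (m : ℤ) - ((b : ℤ) - 1) * S b k m ≤ ((b : ℤ) - 1 - k) * (Nat.log b m + 1) := by
  have hN : m < b ^ (Nat.log b m + 1) := Nat.lt_pow_succ_log_self (by omega) m
  rw [Nm_digits b k hb hk m _ hN]
  calc ∑ j ∈ Finset.range (Nat.log b m + 1), gd b k (m / b ^ j % b)
      ≤ ∑ _j ∈ Finset.range (Nat.log b m + 1), ((b : ℤ) - 1 - k) :=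
        Finset.sum_le_sum fun j _ => gd_le b k _ hb hk (Nat.mod_lt _ (by omega))
    _ = ((b : ℤ) - 1 - k) * (Nat.log b m + 1) := by
        rw [Finset.sum_const, Finset.card_range, nsmul_eq_mul]; push_cast; ring

lemma Nm_ge (b k m : ℕ) (hb : 2 ≤ b) (hk : k < b) (hk1 : 1 ≤ k) :
    (1 - (k : ℤ)) * (Nat.log b m + 1) ≤ (m : ℤ) - ((b : ℤ) - 1) * S b k m := by
  have hN : m < b ^ (Nat.log b m + 1) := Nat.lt_pow_succ_log_self (by omega) m
  rw [Nm_digits b k hb hk m _ hN]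
  calc (1 - (k : ℤ)) * (Nat.log b m + 1)
      = ∑ _j ∈ Finset.range (Nat.log b m + 1), (1 - (k : ℤ)) := by
        rw [Finset.sum_const, Finset.card_range, nsmul_eq_mul]; push_cast; ring
    _ ≤ _ := Finset.sum_le_sum fun j _ => gd_ge b k _ hb hk hk1 (Nat.mod_lt _ (by omega))

lemma Nm_nonneg (b m : ℕ) (hb : 2 ≤ b) :
    0 ≤ (m : ℤ) - ((b : ℤ) - 1) * S b 0 m := by
  rw [Nm_digits b 0 hb (by omega) m _ (Nat.lt_pow_succ_log_self (by omega) m)]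
  exact Finset.sum_nonneg fun j _ => gd_nonneg b _ hb (Nat.mod_lt _ (by omega))

lemma S_succ' (b k m : ℕ) : S b k (m+1) = S b k m + blockLen b k (m+1) :=
  Finset.sum_Icc_succ_top (by omega) _

lemma T_strictMono (b k : ℕ) : StrictMono (T b k) := by
  apply strictMono_nat_of_lt_succ
  intro m
  have := S_succ' b k m
  unfold T
  omega

lemma le_T (b k m : ℕ) : m ≤ T b k m := Nat.le_add_right _ _

lemma T_zero (b k : ℕ) : T b k 0 = 0 := by simp [T, S]

def cfun (b k n : ℕ) : ℕ := Nat.find (⟨n, le_T b k n⟩ : ∃ m, n ≤ T b k m)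

lemma le_T_cfun (b k n : ℕ) : n ≤ T b k (cfun b k n) := by
  unfold cfun
  exact Nat.find_spec (⟨n, le_T b k n⟩ : ∃ m, n ≤ T b k m)

lemma T_lt_iff (b k n m : ℕ) : T b k m < n ↔ m < cfun b k n := by
  constructor
  · intro h
    by_contra hc
    push_neg at hc
    have h1 := (T_strictMono b k).monotone hc
    have h2 := le_T_cfun b k n
    omega
  · intro h
    unfold cfun at h
    have := Nat.find_min (⟨n, le_T b k n⟩ : ∃ m, n ≤ T b k m) h
    omega

lemma E_eq (b k n : ℕ) : ∑ i ∈ Finset.range n, explicitSeq b k i = cfun b k n := by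
  classical
  calc ∑ i ∈ Finset.range n, explicitSeq b k i
      = ∑ i ∈ Finset.range n, (if ∃ m, i = T b k m then 1 else 0) := by
        refine Finset.sum_congr rfl fun i _ => ?_
        unfold explicitSeq
        exact if_congr Iff.rfl rfl rfl
    _ = ((Finset.range n).filter (fun i => ∃ m, i = T b k m)).card := by
        rw [Finset.sum_boole]
        simp
    _ = (Finset.image (T b k) (Finset.range (cfun b k n))).card := by
        congr 1
        ext i
        simp only [Finset.mem_filter, Finset.mem_range, Finset.mem_image]
        constructor
        · rintro ⟨hin, m, rfl⟩
          exact ⟨m, (T_lt_iff b k n m).1 hin, rfl⟩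
        · rintro ⟨m, hm, rfl⟩
          exact ⟨(T_lt_iff b k n m).2 hm, m, rfl⟩
    _ = cfun b k n := by
        rw [Finset.card_image_of_injective _ (T_strictMono b k).injective, Finset.card_range]

lemma cfun_pos (b k n : ℕ) (hn : 1 ≤ n) : 1 ≤ cfun b k n :=
  (T_lt_iff b k n 0).1 (by rw [T_zero]; omega)

lemma cfun_le (b k n : ℕ) : cfun b k n ≤ n := by
  unfold cfun
  exact Nat.find_min' _ (le_T b k n)

lemma T_cfun_pred (b k n : ℕ) (hn : 1 ≤ n) : T b k (cfun b k n - 1) < n :=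
  (T_lt_iff b k n _).2 (by have := cfun_pos b k n hn; omega)

lemma cfun_T (b k m : ℕ) : cfun b k (T b k m) = m := by
  refine le_antisymm (by unfold cfun; exact Nat.find_min' _ le_rfl) ?_
  exact (T_strictMono b k).le_iff_le.1 (le_T_cfun b k (T b k m))

lemma sum_div_le (b : ℕ) (hb : 2 ≤ b) : ∀ N m, ∑ j ∈ Finset.range N, m / b ^ (j+1) ≤ m := by
  intro N
  induction N with
  | zero => intro m; simp
  | succ N ih =>
    intro m
    rw [Finset.sum_range_succ']
    simp only [zero_add, pow_one]
    have e1 : ∀ j, m / b ^ (j+1+1) = (m / b) / b ^ (j+1) := by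
      intro j
      rw [Nat.div_div_eq_div_mul, ← pow_succ']
    rw [Finset.sum_congr rfl fun j _ => e1 j]
    have h1 := ih (m / b)
    have h2 : m / b ≤ m / 2 := Nat.div_le_div_left hb (by omega)
    have h3 : m / 2 * 2 ≤ m := Nat.div_mul_le_self m 2
    omega


lemma T_def_cast (b k m : ℕ) : ((T b k m : ℕ) : ℝ) = (m : ℝ) + ((S b k m : ℕ) : ℝ) := by
  unfold T
  push_cast
  ring

lemma S_le (b k m : ℕ) (hb : 2 ≤ b) (hk : k < b) : S b k m ≤ m := by
  by_cases hk0 : k = 0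
  · subst hk0
    have hN : m < b ^ (Nat.log b m + 1) := Nat.lt_pow_succ_log_self (by omega) m
    rw [S_eq b 0 hb (by omega) m _ hN]
    have e1 : ∀ j : ℕ, (m / b ^ j + 0) / b = m / b ^ (j+1) := by
      intro j
      rw [Nat.add_zero, Nat.div_div_eq_div_mul, ← pow_succ]
    rw [Finset.sum_congr rfl fun j _ => e1 j]
    exact sum_div_le b hb _ m
  · unfold S
    calc ∑ t ∈ Finset.Icc 1 m, blockLen b k t ≤ ∑ _t ∈ Finset.Icc 1 m, 1 := by
          refine Finset.sum_le_sum fun t _ => ?_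
          unfold blockLen
          rw [if_neg hk0]
          split <;> omega
      _ = m := by simp

lemma T_le_two_mul (b k m : ℕ) (hb : 2 ≤ b) (hk : k < b) : T b k m ≤ 2 * m := by
  have := S_le b k m hb hk
  unfold T
  omega

noncomputable def uu (b k : ℕ) : ℕ → ℝ := fun n =>
  (((∑ i ∈ Finset.range n, explicitSeq b k i : ℕ) : ℝ) - ((b : ℝ) - 1) / b * n)
    / (Real.log n / Real.log b)

lemma uu_eq (b k n : ℕ) :
    uu b k n = (((cfun b k n : ℕ) : ℝ) - ((b : ℝ) - 1) / b * n) / Real.logb b n := by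
  unfold uu
  rw [E_eq]
  rfl

open Filter Real


lemma natlog_le_logb' (b m n : ℕ) (hmn : m ≤ n) :
    ((Nat.log b m : ℕ) : ℝ) ≤ Real.logb b n :=
  le_trans (by exact_mod_cast Nat.log_mono_right hmn) (Real.natLog_le_logb n b)

lemma logb_nat_pow (b : ℕ) (hb : 2 ≤ b) (J : ℕ) : Real.logb b ((b ^ J : ℕ) : ℝ) = J := by
  push_cast
  rw [Real.logb_pow, Real.logb_self_eq_one (by exact_mod_cast hb)]
  ring

lemma num_ub (b k n : ℕ) (hb : 2 ≤ b) (hk : k < b) (hn : 1 ≤ n) :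
    ((cfun b k n : ℕ) : ℝ) - ((b : ℝ) - 1) / b * n
      ≤ (((b : ℝ) - 1 - k) * (Real.logb b n + 1) + 1) / b := by
  have hbR : (0:ℝ) < b := by positivity
  set m := cfun b k n with hm
  have hm1 : 1 ≤ m := cfun_pos b k n hn
  have hmn : m ≤ n := cfun_le b k n
  have hTm : T b k (m - 1) < n := T_cfun_pred b k n hn
  have hTmR : ((T b k (m-1) : ℕ) : ℝ) + 1 ≤ (n : ℝ) := by exact_mod_cast hTm
  have h1 : (m : ℝ) - ((b:ℝ)-1)/b * n
      ≤ (m : ℝ) - ((b:ℝ)-1)/b * (((T b k (m-1) : ℕ) : ℝ) + 1) := by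
    have hc : (0:ℝ) ≤ ((b:ℝ)-1)/b := by
      have : (1:ℝ) ≤ b := by exact_mod_cast (by omega : 1 ≤ b)
      apply div_nonneg <;> linarith
    nlinarith [mul_le_mul_of_nonneg_left hTmR hc]
  have hNm := Nm_le b k (m-1) hb hk
  have hNmR : ((m-1 : ℕ) : ℝ) - ((b:ℝ)-1) * ((S b k (m-1) : ℕ) : ℝ)
      ≤ ((b:ℝ)-1-k) * (((Nat.log b (m-1) : ℕ) : ℝ) + 1) := by exact_mod_cast hNm
  have hlog : ((Nat.log b (m-1) : ℕ) : ℝ) ≤ Real.logb b n := natlog_le_logb' b (m-1) n (by omega)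
  have hbk0 : (0:ℝ) ≤ (b:ℝ) - 1 - k := by
    have : (k:ℝ) + 1 ≤ b := by exact_mod_cast hk
    linarith
  have hcast : ((m-1 : ℕ) : ℝ) = (m : ℝ) - 1 := by
    rw [Nat.cast_sub hm1, Nat.cast_one]
  have key : (m : ℝ) - ((b:ℝ)-1)/b * (((T b k (m-1):ℕ):ℝ) + 1)
      = (((m-1:ℕ):ℝ) - ((b:ℝ)-1) * ((S b k (m-1):ℕ):ℝ) + 1) / b := by
    rw [T_def_cast, hcast]
    field_simp
    ring
  have h3 : ((b:ℝ)-1-k) * (((Nat.log b (m-1):ℕ):ℝ) + 1) ≤ ((b:ℝ)-1-k) * (Real.logb b n + 1) :=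
    mul_le_mul_of_nonneg_left (by linarith) hbk0
  calc (m:ℝ) - ((b:ℝ)-1)/b * n ≤ _ := h1
    _ = (((m-1:ℕ):ℝ) - ((b:ℝ)-1) * ((S b k (m-1):ℕ):ℝ) + 1)/b := key
    _ ≤ (((b:ℝ)-1-k) * (Real.logb b n + 1) + 1)/b := by
        apply (div_le_div_iff_of_pos_right hbR).2
        linarith

lemma num_lb (b k n : ℕ) (hb : 2 ≤ b) (hk : k < b) (hk1 : 1 ≤ k) (hn : 1 ≤ n) :
    (1 - (k:ℝ)) * (Real.logb b n + 1) / b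
      ≤ ((cfun b k n : ℕ) : ℝ) - ((b : ℝ) - 1) / b * n := by
  have hbR : (0:ℝ) < b := by positivity
  set m := cfun b k n with hm
  have hmn : m ≤ n := cfun_le b k n
  have hnT : (n : ℝ) ≤ ((T b k m : ℕ) : ℝ) := by exact_mod_cast le_T_cfun b k n
  have h1 : (m : ℝ) - ((b:ℝ)-1)/b * ((T b k m : ℕ) : ℝ) ≤ (m : ℝ) - ((b:ℝ)-1)/b * n := by
    have hc : (0:ℝ) ≤ ((b:ℝ)-1)/b := by
      apply div_nonneg
      · have : (1:ℝ) ≤ b := by exact_mod_cast (by omega : 1 ≤ b)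
        linarith
      · linarith
    nlinarith [mul_le_mul_of_nonneg_left hnT hc]
  have key : (m : ℝ) - ((b:ℝ)-1)/b * ((T b k m : ℕ) : ℝ)
      = ((m:ℝ) - ((b:ℝ)-1) * ((S b k m : ℕ):ℝ)) / b := by
    rw [T_def_cast]
    field_simp
    ring
  have hNmR : (1-(k:ℝ)) * (((Nat.log b m : ℕ):ℝ) + 1)
      ≤ (m:ℝ) - ((b:ℝ)-1) * ((S b k m : ℕ):ℝ) := by exact_mod_cast Nm_ge b k m hb hk hk1
  have hlog : ((Nat.log b m : ℕ):ℝ) ≤ Real.logb b n := natlog_le_logb' b m n hmn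
  have h3 : (1-(k:ℝ)) * (Real.logb b n + 1) ≤ (1-(k:ℝ)) * (((Nat.log b m : ℕ):ℝ) + 1) := by
    apply mul_le_mul_of_nonpos_left (by linarith)
    have : (1:ℝ) ≤ k := by exact_mod_cast hk1
    linarith
  calc (1 - (k:ℝ)) * (Real.logb b n + 1) / b
      ≤ ((m:ℝ) - ((b:ℝ)-1) * ((S b k m : ℕ):ℝ)) / b := by
        apply (div_le_div_iff_of_pos_right hbR).2
        linarith
    _ = (m : ℝ) - ((b:ℝ)-1)/b * ((T b k m : ℕ) : ℝ) := key.symm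
    _ ≤ _ := h1

lemma num_lb0 (b n : ℕ) (hb : 2 ≤ b) (hn : 1 ≤ n) :
    0 ≤ ((cfun b 0 n : ℕ) : ℝ) - ((b : ℝ) - 1) / b * n := by
  have hbR : (0:ℝ) < b := by positivity
  set m := cfun b 0 n with hm
  have hnT : (n : ℝ) ≤ ((T b 0 m : ℕ) : ℝ) := by exact_mod_cast le_T_cfun b 0 n
  have h1 : (m : ℝ) - ((b:ℝ)-1)/b * ((T b 0 m : ℕ) : ℝ) ≤ (m : ℝ) - ((b:ℝ)-1)/b * n := by
    have hc : (0:ℝ) ≤ ((b:ℝ)-1)/b := by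
      apply div_nonneg
      · have : (1:ℝ) ≤ b := by exact_mod_cast (by omega : 1 ≤ b)
        linarith
      · linarith
    nlinarith [mul_le_mul_of_nonneg_left hnT hc]
  have key : (m : ℝ) - ((b:ℝ)-1)/b * ((T b 0 m : ℕ) : ℝ)
      = ((m:ℝ) - ((b:ℝ)-1) * ((S b 0 m : ℕ):ℝ)) / b := by
    rw [T_def_cast]
    field_simp
    ring
  have hNmR : (0:ℝ) ≤ (m:ℝ) - ((b:ℝ)-1) * ((S b 0 m : ℕ):ℝ) := by
    exact_mod_cast Nm_nonneg b m hb
  calc (0:ℝ) ≤ ((m:ℝ) - ((b:ℝ)-1) * ((S b 0 m : ℕ):ℝ)) / b := by positivity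
    _ = _ := key.symm
    _ ≤ _ := h1

lemma uu_le_vU (b k n : ℕ) (hb : 2 ≤ b) (hk : k < b) (hn : 2 ≤ n) :
    uu b k n ≤ ((b:ℝ)-1-k)/b + ((b:ℝ)-k)/(b * Real.logb b n) := by
  have hbR : (0:ℝ) < b := by positivity
  have hL : 0 < Real.logb b n := Real.logb_pos (by exact_mod_cast hb) (by exact_mod_cast hn)
  rw [uu_eq]
  calc _ ≤ ((((b:ℝ)-1-k) * (Real.logb b n + 1) + 1)/b) / Real.logb b n :=
        (div_le_div_iff_of_pos_right hL).2 (num_ub b k n hb hk (by omega))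
    _ = ((b:ℝ)-1-k)/b + ((b:ℝ)-k)/(b * Real.logb b n) := by
        field_simp
        ring

lemma vL_le_uu (b k n : ℕ) (hb : 2 ≤ b) (hk : k < b) (hk1 : 1 ≤ k) (hn : 2 ≤ n) :
    (1-(k:ℝ))/b + (1-(k:ℝ))/(b * Real.logb b n) ≤ uu b k n := by
  have hbR : (0:ℝ) < b := by positivity
  have hL : 0 < Real.logb b n := Real.logb_pos (by exact_mod_cast hb) (by exact_mod_cast hn)
  rw [uu_eq]
  calc (1-(k:ℝ))/b + (1-(k:ℝ))/(b * Real.logb b n)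
      = ((1 - (k:ℝ)) * (Real.logb b n + 1) / b) / Real.logb b n := by
        field_simp
    _ ≤ _ := (div_le_div_iff_of_pos_right hL).2 (num_lb b k n hb hk hk1 (by omega))

lemma uu_nonneg (b n : ℕ) (hb : 2 ≤ b) (hn : 2 ≤ n) : 0 ≤ uu b 0 n := by
  have hL : 0 < Real.logb b n := Real.logb_pos (by exact_mod_cast hb) (by exact_mod_cast hn)
  rw [uu_eq]
  exact div_nonneg (num_lb0 b n hb (by omega)) hL.le

lemma uu_T (b k m : ℕ) (hb : 2 ≤ b) :
    uu b k (T b k m)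
      = (((m : ℤ) - ((b:ℤ)-1) * S b k m : ℤ) : ℝ) / (b * Real.logb b (T b k m)) := by
  have hbR : (0:ℝ) < b := by positivity
  rw [uu_eq, cfun_T]
  have hnum : ((m:ℕ):ℝ) - ((b:ℝ)-1)/b * ((T b k m : ℕ):ℝ)
      = (((m : ℤ) - ((b:ℤ)-1) * S b k m : ℤ) : ℝ) / b := by
    rw [T_def_cast]
    push_cast
    field_simp
    ring
  rw [hnum, div_div]

lemma tendsto_logb_n (b : ℕ) (hb : 2 ≤ b) :
    Tendsto (fun n : ℕ => Real.logb b n) atTop atTop :=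
  (Real.tendsto_logb_atTop (by exact_mod_cast hb : (1:ℝ) < b)).comp tendsto_natCast_atTop_atTop

lemma tendsto_c_div (b : ℕ) (hb : 2 ≤ b) (c : ℝ) :
    Tendsto (fun n : ℕ => c / (b * Real.logb b n)) atTop (nhds 0) := by
  have h1 : Tendsto (fun n : ℕ => (b:ℝ) * Real.logb b n) atTop atTop :=
    (tendsto_const_mul_atTop_of_pos (by positivity)).2 (tendsto_logb_n b hb)
  simpa [div_eq_mul_inv] using h1.inv_tendsto_atTop.const_mul c

lemma tendsto_vU (b k : ℕ) (hb : 2 ≤ b) :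
    Tendsto (fun n : ℕ => ((b:ℝ)-1-k)/b + ((b:ℝ)-k)/(b * Real.logb b n)) atTop
      (nhds (((b:ℝ)-1-k)/b)) := by
  simpa using tendsto_const_nhds.add (tendsto_c_div b hb ((b:ℝ)-k))

lemma tendsto_vL (b k : ℕ) (hb : 2 ≤ b) :
    Tendsto (fun n : ℕ => (1-(k:ℝ))/b + (1-(k:ℝ))/(b * Real.logb b n)) atTop
      (nhds ((1-(k:ℝ))/b)) := by
  simpa using tendsto_const_nhds.add (tendsto_c_div b hb (1-(k:ℝ)))

lemma tendsto_uu_rep (b k r : ℕ) (hb : 2 ≤ b) (hk : k < b) (hr : 1 ≤ r) (hrb : r < b) :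
    Tendsto (fun J : ℕ => uu b k (T b k (r * G b J))) atTop (nhds ((gd b k r : ℝ) / b)) := by
  have hbR : (0:ℝ) < b := by positivity
  have hb1R : (1:ℝ) < b := by exact_mod_cast hb
  have hTb : ∀ J : ℕ, 1 ≤ J → ((J:ℝ) - 1) ≤ Real.logb b (T b k (r * G b J))
      ∧ Real.logb b (T b k (r * G b J)) ≤ (J:ℝ) + 1 := by
    intro J hJ
    have h1 : b ^ (J-1) ≤ r * G b J :=
      le_trans (pow_le_G b J hb hJ) (Nat.le_mul_of_pos_left _ (by omega))
    have h2 : r * G b J ≤ T b k (r * G b J) := le_T b k _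
    have h3 : T b k (r * G b J) ≤ 2 * (r * G b J) := T_le_two_mul b k _ hb hk
    have h4 : 2 * (r * G b J) ≤ 2 * b ^ J := by
      have := rep_lt b r J hb hrb
      omega
    have h5 : 2 * b ^ J ≤ b ^ (J+1) := by
      have h6 : 2 * b ^ J ≤ b * b ^ J := Nat.mul_le_mul_right _ hb
      have h7 : b ^ (J+1) = b * b ^ J := pow_succ' b J
      omega
    have hpowpos : (0:ℝ) < ((b ^ (J-1) : ℕ) : ℝ) := by
      exact_mod_cast Nat.pow_pos (by omega)
    constructor
    · calc ((J:ℝ)-1) = ((J-1 : ℕ) : ℝ) := by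
            rw [Nat.cast_sub hJ, Nat.cast_one]
        _ = Real.logb b ((b ^ (J-1) : ℕ) : ℝ) := (logb_nat_pow b hb (J-1)).symm
        _ ≤ Real.logb b ((T b k (r * G b J) : ℕ) : ℝ) := by
            apply Real.logb_le_logb_of_le hb1R hpowpos
            exact_mod_cast le_trans h1 h2
    · calc Real.logb b ((T b k (r * G b J) : ℕ) : ℝ)
          ≤ Real.logb b ((b ^ (J+1) : ℕ) : ℝ) := by
            apply Real.logb_le_logb_of_le hb1R
            · have : (0:ℕ) < b ^ (J-1) := Nat.pow_pos (by omega)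
              have := le_trans h1 h2
              exact_mod_cast (by omega : (0:ℕ) < T b k (r * G b J))
            · exact_mod_cast by omega
        _ = (J:ℝ)+1 := by rw [logb_nat_pow b hb]; push_cast; ring
  have hev : ∀ᶠ J : ℕ in atTop, ((gd b k r : ℝ)/b) * ((J:ℝ) / Real.logb b (T b k (r * G b J)))
      = uu b k (T b k (r * G b J)) := by
    filter_upwards [eventually_ge_atTop 2] with J hJ
    have hL := hTb J (by omega)
    have hJ2 : (2:ℝ) ≤ (J:ℝ) := by exact_mod_cast hJ
    have hLpos : 0 < Real.logb b (T b k (r * G b J)) := by linarith [hL.1]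
    rw [uu_T b k _ hb]
    have hNm : ((((r * G b J : ℕ) : ℤ) - ((b:ℤ)-1) * S b k (r * G b J) : ℤ) : ℝ)
        = (J : ℝ) * (gd b k r : ℝ) := by
      rw [Nm_rep b k r J hb hk hrb]
      push_cast
      ring
    rw [hNm]
    field_simp
  have hratio : Tendsto (fun J : ℕ => (J:ℝ) / Real.logb b (T b k (r * G b J))) atTop (nhds 1) := by
    apply tendsto_of_tendsto_of_tendsto_of_le_of_le'
      (show Tendsto (fun J : ℕ => (J:ℝ)/((J:ℝ)+1)) atTop (nhds 1) by
        simpa using tendsto_natCast_div_add_atTop (1:ℝ))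
      (show Tendsto (fun J : ℕ => (J:ℝ)/((J:ℝ)-1)) atTop (nhds 1) by
        simpa [sub_eq_add_neg] using tendsto_natCast_div_add_atTop (-1:ℝ))
    · filter_upwards [eventually_ge_atTop 2] with J hJ
      have hL := hTb J (by omega)
      have hJ2 : (2:ℝ) ≤ (J:ℝ) := by exact_mod_cast hJ
      have hLpos : 0 < Real.logb b (T b k (r * G b J)) := by linarith [hL.1]
      exact div_le_div_of_nonneg_left (by linarith) hLpos (by linarith [hL.2])
    · filter_upwards [eventually_ge_atTop 2] with J hJ
      have hL := hTb J (by omega)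
      have hJ2 : (2:ℝ) ≤ (J:ℝ) := by exact_mod_cast hJ
      have hLpos : 0 < Real.logb b (T b k (r * G b J)) := by linarith [hL.1]
      exact div_le_div_of_nonneg_left (by linarith) (by linarith) (by linarith [hL.1])
  have hmul : Tendsto (fun J : ℕ => ((gd b k r : ℝ)/b)
      * ((J:ℝ) / Real.logb b (T b k (r * G b J)))) atTop (nhds ((gd b k r : ℝ)/b)) := by
    simpa using tendsto_const_nhds.mul hratio
  exact hmul.congr' hev

lemma tendsto_uu_pow (b k : ℕ) (hb : 2 ≤ b) (hk : k < b) :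
    Tendsto (fun J : ℕ => uu b k (T b k (b ^ J))) atTop (nhds 0) := by
  have hb1R : (1:ℝ) < b := by exact_mod_cast hb
  have hrw : ∀ J : ℕ, uu b k (T b k (b ^ J))
      = ((gd b k 1 : ℤ) : ℝ) / ((b:ℝ) * Real.logb b (T b k (b^J))) := by
    intro J
    rw [uu_T b k _ hb, Nm_pow b k J hb hk]
  have hL : Tendsto (fun J : ℕ => (b:ℝ) * Real.logb b (T b k (b ^ J))) atTop atTop := by
    apply tendsto_atTop_mono' atTop ?_ tendsto_natCast_atTop_atTop
    filter_upwards [eventually_ge_atTop 0] with J _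
    have hpos : (0:ℕ) < b ^ J := Nat.pow_pos (by omega)
    have h2 : Real.logb b ((b^J:ℕ):ℝ) ≤ Real.logb b ((T b k (b^J) : ℕ):ℝ) := by
      apply Real.logb_le_logb_of_le hb1R (by exact_mod_cast hpos)
      exact_mod_cast le_T b k _
    have h1 : (J:ℝ) ≤ Real.logb b ((T b k (b^J) : ℕ):ℝ) := by
      rw [← logb_nat_pow b hb J]
      exact h2
    have h3 : (0:ℝ) ≤ Real.logb b ((T b k (b^J) : ℕ):ℝ) :=
      le_trans (by positivity) h1
    calc (J:ℝ) ≤ Real.logb b ((T b k (b^J) : ℕ):ℝ) := h1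
      _ ≤ (b:ℝ) * Real.logb b ((T b k (b^J) : ℕ):ℝ) :=
          le_mul_of_one_le_left h3 (by linarith)
  simp only [hrw]
  simpa [div_eq_mul_inv] using hL.inv_tendsto_atTop.const_mul ((gd b k 1 : ℤ):ℝ)

lemma tendsto_T_rep (b k r : ℕ) (hb : 2 ≤ b) (hr : 1 ≤ r) :
    Tendsto (fun J : ℕ => T b k (r * G b J)) atTop atTop :=
  tendsto_atTop_mono
    (fun J => le_trans (le_trans (le_G b J hb) (Nat.le_mul_of_pos_left _ (by omega)))
      (le_T b k _)) tendsto_id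

lemma tendsto_T_pow (b k : ℕ) (hb : 2 ≤ b) :
    Tendsto (fun J : ℕ => T b k (b ^ J)) atTop atTop :=
  tendsto_atTop_mono
    (fun J => le_trans (le_trans (Nat.lt_pow_self (n := J) (a := b) (by omega)).le (le_T b k _)) le_rfl)
    tendsto_id

lemma bounded_above (b k : ℕ) (hb : 2 ≤ b) (hk : k < b) :
    Filter.atTop.IsBoundedUnder (· ≤ ·) (uu b k) :=
  (tendsto_vU b k hb).isBoundedUnder_le.mono_le
    (Filter.eventually_atTop.2 ⟨2, fun n hn => uu_le_vU b k n hb hk hn⟩)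

lemma bounded_below (b k : ℕ) (hb : 2 ≤ b) (hk : k < b) :
    Filter.atTop.IsBoundedUnder (· ≥ ·) (uu b k) := by
  by_cases hk0 : k = 0
  · subst hk0
    exact (tendsto_const_nhds (x := (0:ℝ))).isBoundedUnder_ge.mono_ge
      (Filter.eventually_atTop.2 ⟨2, fun n hn => uu_nonneg b n hb hn⟩)
  · exact (tendsto_vL b k hb).isBoundedUnder_ge.mono_ge
      (Filter.eventually_atTop.2 ⟨2, fun n hn => vL_le_uu b k n hb hk (by omega) hn⟩)

lemma sub_le_limsup (b k : ℕ) (hb : 2 ≤ b) (hk : k < b) (φ : ℕ → ℕ) (c : ℝ)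
    (hφ : Tendsto φ atTop atTop) (hc : Tendsto (fun J => uu b k (φ J)) atTop (nhds c)) :
    c ≤ Filter.limsup (uu b k) atTop := by
  have h1 : Tendsto (uu b k) (map φ atTop) (nhds c) := by rwa [tendsto_map'_iff]
  haveI : (map φ atTop).NeBot := map_neBot
  rw [← h1.limsup_eq]
  exact Filter.limsup_le_limsup_of_le hφ h1.isCoboundedUnder_le (bounded_above b k hb hk)

lemma liminf_le_sub (b k : ℕ) (hb : 2 ≤ b) (hk : k < b) (φ : ℕ → ℕ) (c : ℝ)
    (hφ : Tendsto φ atTop atTop) (hc : Tendsto (fun J => uu b k (φ J)) atTop (nhds c)) :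
    Filter.liminf (uu b k) atTop ≤ c := by
  have h1 : Tendsto (uu b k) (map φ atTop) (nhds c) := by rwa [tendsto_map'_iff]
  haveI : (map φ atTop).NeBot := map_neBot
  rw [← h1.liminf_eq]
  exact Filter.liminf_le_liminf_of_le hφ (bounded_below b k hb hk) h1.isCoboundedUnder_ge

lemma limsup_uu (b k : ℕ) (hb : 2 ≤ b) (hk : k < b) :
    Filter.limsup (uu b k) atTop = ((b:ℝ)-1-k)/b := by
  apply le_antisymm
  · calc Filter.limsup (uu b k) atTop
        ≤ Filter.limsup (fun n : ℕ => ((b:ℝ)-1-k)/b + ((b:ℝ)-k)/(b * Real.logb b n)) atTop :=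
          Filter.limsup_le_limsup
            (Filter.eventually_atTop.2 ⟨2, fun n hn => uu_le_vU b k n hb hk hn⟩)
            (bounded_below b k hb hk).isCoboundedUnder_le
            (tendsto_vU b k hb).isBoundedUnder_le
      _ = ((b:ℝ)-1-k)/b := (tendsto_vU b k hb).limsup_eq
  · by_cases hkb : k + 2 ≤ b
    · have h := sub_le_limsup b k hb hk _ _ (tendsto_T_rep b k (b-k-1) hb (by omega))
        (tendsto_uu_rep b k (b-k-1) hb hk (by omega) (by omega))
      have hgd : ((gd b k (b-k-1) : ℤ) : ℝ) = (b:ℝ)-1-k := by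
        have h1 : gd b k (b-k-1) = ((b-k-1 : ℕ) : ℤ) := by
          unfold gd
          rw [if_neg (by omega)]
          ring
        have h2 : ((b-k-1 : ℕ) : ℤ) = (b:ℤ) - k - 1 := by omega
        rw [h1, h2]
        push_cast
        ring
      rwa [hgd] at h
    · have h := sub_le_limsup b k hb hk _ _ (tendsto_T_pow b k hb) (tendsto_uu_pow b k hb hk)
      have hz : ((b:ℝ)-1-k)/b = 0 := by
        have hkb2 : k = b - 1 := by omega
        have : (k:ℝ) = (b:ℝ) - 1 := by
          rw [hkb2, Nat.cast_sub (by omega), Nat.cast_one]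
        rw [this]
        ring_nf
      rw [hz]
      exact h

lemma liminf_uu_pos (b k : ℕ) (hb : 2 ≤ b) (hk : k < b) (hk1 : 1 ≤ k) :
    Filter.liminf (uu b k) atTop = (1-(k:ℝ))/b := by
  apply le_antisymm
  · have h := liminf_le_sub b k hb hk _ _ (tendsto_T_rep b k (b-k) hb (by omega))
      (tendsto_uu_rep b k (b-k) hb hk (by omega) (by omega))
    have hgd : ((gd b k (b-k) : ℤ) : ℝ) = 1-(k:ℝ) := by
      have h1 : gd b k (b-k) = ((b-k : ℕ) : ℤ) - ((b:ℤ)-1) := by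
        unfold gd
        rw [if_pos (by omega)]
        ring
      have h2 : ((b-k : ℕ) : ℤ) = (b:ℤ) - k := by omega
      rw [h1, h2]
      push_cast
      ring
    rwa [hgd] at h
  · calc (1-(k:ℝ))/b
        = Filter.liminf (fun n : ℕ => (1-(k:ℝ))/b + (1-(k:ℝ))/(b * Real.logb b n)) atTop :=
          ((tendsto_vL b k hb).liminf_eq).symm
      _ ≤ Filter.liminf (uu b k) atTop :=
          Filter.liminf_le_liminf
            (Filter.eventually_atTop.2 ⟨2, fun n hn => vL_le_uu b k n hb hk hk1 hn⟩)
            (tendsto_vL b k hb).isBoundedUnder_ge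
            (bounded_above b k hb hk).isCoboundedUnder_ge

lemma liminf_uu_zero (b : ℕ) (hb : 2 ≤ b) :
    Filter.liminf (uu b 0) atTop = 0 := by
  apply le_antisymm
  · exact liminf_le_sub b 0 hb (by omega) _ _ (tendsto_T_pow b 0 hb)
      (tendsto_uu_pow b 0 hb (by omega))
  · calc (0:ℝ) = Filter.liminf (fun _ : ℕ => (0:ℝ)) atTop :=
          ((tendsto_const_nhds).liminf_eq).symm
      _ ≤ Filter.liminf (uu b 0) atTop :=
          Filter.liminf_le_liminf
            (Filter.eventually_atTop.2 ⟨2, fun n hn => uu_nonneg b n hb hn⟩)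
            (tendsto_const_nhds (x := (0:ℝ))).isBoundedUnder_ge
            (bounded_above b 0 hb (by omega)).isCoboundedUnder_ge



end RTD

/-- For `b ≥ 2` and `0 ≤ k < b`, letting `E_n` be the number of ones among the first
`n` entries of the escape sequence `e(𝕋_b, k)`, `ρ = (b-1)/b`, and
`Δ_n = (E_n - ρ n)/log_b n`, we have `liminf Δ_n = 0` if `k = 0`,
`liminf Δ_n = -(k-1)/b` if `k > 0`, and `limsup Δ_n = (b-k-1)/b`. -/
theorem regular_tree_discrepancy (b k : ℕ) (hb : 2 ≤ b) (hk : k < b) :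
    (Filter.liminf
        (fun n : ℕ =>
          (((∑ i ∈ Finset.range n, explicitSeq b k i : ℕ) : ℝ)
              - ((b : ℝ) - 1) / b * n) / (Real.log n / Real.log b))
        Filter.atTop
      = if k = 0 then 0 else -(((k : ℝ) - 1) / b)) ∧
    (Filter.limsup
        (fun n : ℕ =>
          (((∑ i ∈ Finset.range n, explicitSeq b k i : ℕ) : ℝ)
              - ((b : ℝ) - 1) / b * n) / (Real.log n / Real.log b))
        Filter.atTop
      = ((b : ℝ) - k - 1) / b) := by
  have hfn : (fun n : ℕ =>
      (((∑ i ∈ Finset.range n, explicitSeq b k i : ℕ) : ℝ)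
          - ((b : ℝ) - 1) / b * n) / (Real.log n / Real.log b)) = RTD.uu b k := rfl
  rw [hfn]
  constructor
  · by_cases hk0 : k = 0
    · subst hk0
      rw [if_pos rfl]
      exact RTD.liminf_uu_zero b hb
    · rw [if_neg hk0, RTD.liminf_uu_pos b k hb hk (by omega)]
      ring
  · rw [RTD.limsup_uu b k hb hk]
    ring
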